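/- Let (z_n)_{n≥0} be a sequence of strictly positive reals with liminf_{n→∞} (1/n)·log(1/z_n) > 0. Then there exists α ∈ (0,1) such that for infinitely many n, z_n = min_{0≤m≤n} z_m and z_n ≤ α·min_{0≤m≤n−1} z_m. -/

import Mathlib

open Filter

/-- A positive real sequence with `liminf (1/n) log(1/z_n) > 0` has some `α ∈ (0,1)`
such that for infinitely many `n`, `z_n` is the running minimum and is at most `α`
times the previous running minimum. -/
theorem stmt15 (z : ℕ → ℝ) (hpos : ∀ n, 0 < z n)
    (hdecay : 0 < liminf (fun n : ℕ => Real.log (1 / z n) / n) atTop) :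
    ∃ α : ℝ, 0 < α ∧ α < 1 ∧
      {n : ℕ | (∀ m ≤ n, z n ≤ z m) ∧ ∀ m < n, z n ≤ α * z m}.Infinite := by
  rw [liminf_eq] at hdecay
  set S : Set ℝ := {a : ℝ | ∀ᶠ n : ℕ in atTop, a ≤ Real.log (1 / z n) / n} with hSdef
  have hne : S.Nonempty := by
    by_contra h
    rw [Set.not_nonempty_iff_eq_empty] at h
    rw [h, Real.sSup_empty] at hdecay
    exact lt_irrefl 0 hdecay
  obtain ⟨c, hcS, hc⟩ := exists_lt_of_lt_csSup hne hdecay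
  set α : ℝ := Real.exp (-(c / 2)) with hαdef
  have hα0 : 0 < α := Real.exp_pos _
  have hα1 : α < 1 := by
    rw [hαdef, Real.exp_lt_one_iff]
    linarith
  refine ⟨α, hα0, hα1, ?_⟩
  set T : Set ℕ := {n : ℕ | ∀ m < n, z n ≤ α * z m} with hTdef
  have hsub : T ⊆ {n : ℕ | (∀ m ≤ n, z n ≤ z m) ∧ ∀ m < n, z n ≤ α * z m} := by
    intro n hn
    refine ⟨fun m hm => ?_, hn⟩
    rcases eq_or_lt_of_le hm with rfl | hm'
    · exact le_refl _
    · have h1 := hn m hm'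
      nlinarith [hpos m]
  refine Set.Infinite.mono hsub ?_
  by_contra hfin
  rw [Set.not_infinite] at hfin
  obtain ⟨N, hN⟩ := hfin.bddAbove
  set MN : ℝ := (Finset.range (N + 1)).inf' (show (Finset.range (N + 1)).Nonempty from ⟨0, Finset.mem_range.2 (Nat.succ_pos N)⟩) z
    with hMNdef
  have hMNpos : 0 < MN := by
    rw [hMNdef, Finset.lt_inf'_iff]
    intro m _
    exact hpos m
  have key : ∀ n : ℕ, ∀ m ≤ N + n, α ^ n * MN ≤ z m := by
    intro n
    induction n with
    | zero =>
      intro m hm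
      have hm' : m ∈ Finset.range (N + 1) := Finset.mem_range.2 (by omega)
      rw [pow_zero, one_mul, hMNdef]
      exact Finset.inf'_le z hm'
    | succ n ih =>
      intro m hm
      rcases Nat.lt_or_ge m (N + n + 1) with h | h
      · calc α ^ (n + 1) * MN ≤ α ^ n * MN := by
              apply mul_le_mul_of_nonneg_right _ hMNpos.le
              exact pow_le_pow_of_le_one hα0.le hα1.le (by omega)
          _ ≤ z m := ih m (by omega)
      · have hm' : m = N + n + 1 := by omega
        subst hm'
        have hnot : (N + n + 1) ∉ T := fun hmem => by
          have := hN hmem; omega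
        rw [hTdef] at hnot
        simp only [Set.mem_setOf_eq, not_forall] at hnot
        obtain ⟨k, hk, hzk⟩ := hnot
        push_neg at hzk
        have hik := ih k (by omega)
        calc α ^ (n + 1) * MN = α * (α ^ n * MN) := by ring
          _ ≤ α * z k := mul_le_mul_of_nonneg_left hik hα0.le
          _ ≤ z (N + n + 1) := hzk.le
  -- eventual bound from c ∈ S
  obtain ⟨N₁, hN₁⟩ := eventually_atTop.1 hcS
  have hzbound : ∀ k : ℕ, N₁ ≤ k → 1 ≤ k → z k ≤ Real.exp (-(c * k)) := by
    intro k hk hk1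
    have h1 := hN₁ k hk
    have hkpos : (0 : ℝ) < k := by exact_mod_cast hk1
    rw [le_div_iff₀ hkpos] at h1
    have hlog : Real.log (1 / z k) = -Real.log (z k) := by
      rw [one_div, Real.log_inv]
    rw [hlog] at h1
    have h2 : Real.log (z k) ≤ -(c * k) := by linarith
    calc z k = Real.exp (Real.log (z k)) := (Real.exp_log (hpos k)).symm
      _ ≤ Real.exp (-(c * k)) := Real.exp_le_exp.2 h2
  -- pick large n
  obtain ⟨n₀, hn₀⟩ := exists_nat_gt ((-(c * N) - Real.log MN) * 2 / c)
  set n : ℕ := max (max n₀ N₁) 1 with hndef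
  have hnn₀ : (n₀ : ℝ) ≤ n := by
    exact_mod_cast le_max_of_le_left (le_max_left _ _)
  have hnN₁ : N₁ ≤ N + n := le_add_left (le_max_of_le_left (le_max_right _ _))
  have hn1 : 1 ≤ N + n := le_add_left (le_max_right _ _)
  have hkey := key n (N + n) le_rfl
  have hzb := hzbound (N + n) hnN₁ hn1
  have hαn : α ^ n = Real.exp (-(c / 2) * n) := by
    rw [hαdef, ← Real.exp_nat_mul]
    ring_nf
  have hcomb : Real.exp (-(c / 2) * n) * MN ≤ Real.exp (-(c * (N + n))) := by
    rw [← hαn]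
    calc α ^ n * MN ≤ z (N + n) := hkey
      _ ≤ Real.exp (-(c * (N + n))) := by
          convert hzb using 3
          push_cast; ring
  have hMNle : MN ≤ Real.exp (-(c * (N + n)) + (c / 2) * n) := by
    rw [Real.exp_add]
    have := mul_le_mul_of_nonneg_right hcomb (Real.exp_pos ((c / 2) * n)).le
    rw [mul_comm (Real.exp (-(c / 2) * n)) MN, mul_assoc, ← Real.exp_add] at this
    simpa using this
  have hlogMN : Real.log MN ≤ -(c * (N + n)) + (c / 2) * n := by
    calc Real.log MN ≤ Real.log (Real.exp (-(c * (N + n)) + (c / 2) * n)) :=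
          Real.log_le_log hMNpos hMNle
      _ = _ := Real.log_exp _
  -- contradiction from n₀ choice
  have hcn : ((-(c * N) - Real.log MN) * 2 / c) < n := lt_of_lt_of_le hn₀ hnn₀
  rw [div_lt_iff₀ hc] at hcn
  have hNn : ((N : ℝ) + n) = ((N + n : ℕ) : ℝ) := by push_cast; ring
  have : -(c * ((N : ℝ) + n)) + (c / 2) * n < Real.log MN := by nlinarith
  rw [hNn] at this
  linarith
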